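/- arXiv:math/0512633 — 4 statements merged into one kernel-verified Lean document; each statement's English description precedes it below -/
import Mathlib

section
/- Let E be a finite-dimensional real normed space and F a strongly convex Minkowski norm on E, i.e. F is a Minkowski norm, the function F² is twice continuously differentiable on E ∖ {0}, and for each y ≠ 0 the symmetric bilinear form g_y(u,v) := (1/2)·D²(F²)(y)[u,v] is positive definite. Then the Legendre transform is norm-preserving: for every y ≠ 0, F*(ℓ(y)) = F(y), where ℓ(y) := (1/2)·D(F²)(y) ∈ E* is half the Fréchet derivative of F² at y (equivalently ℓ(y) = g_y(y,·)). -/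
open Set

/-- **Lemma 3.1 (norm-preserving part).** Let `F` be a strongly convex Minkowski norm on a
finite-dimensional real normed space `E`: `F` is continuous, positive away from `0`,
positively homogeneous of degree one, `F²` is `C²` away from `0`, and for each `y ≠ 0`
the fundamental form `g_y(u,v) = ½ D²(F²)(y)[u,v]` is positive definite.  Then the
Legendre transform `ℓ(y) = ½ D(F²)(y)` is norm-preserving: `F*(ℓ(y)) = F(y)` for all
`y ≠ 0`, where `F*(ξ) = ⨆_{x ≠ 0} ξ(x)/F(x)` is the dual norm. -/
theorem legendre_norm_preserving {E : Type*} [NormedAddCommGroup E] [NormedSpace ℝ E]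
    [FiniteDimensional ℝ E]
    (F : E → ℝ) (hFcont : Continuous F)
    (hFpos : ∀ x : E, x ≠ 0 → 0 < F x)
    (hFhom : ∀ t : ℝ, 0 < t → ∀ x : E, F (t • x) = t * F x)
    (hC2 : ∀ y : E, y ≠ 0 → ContDiffAt ℝ 2 (fun x : E => (F x) ^ 2) y)
    (hposdef : ∀ y : E, y ≠ 0 → ∀ u : E, u ≠ 0 →
      0 < (1 / 2 : ℝ) * (fderiv ℝ (fun x : E => fderiv ℝ (fun z : E => (F z) ^ 2) x) y u u))
    (y : E) (hy : y ≠ 0) :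
    (⨆ x : {x : E // x ≠ 0},
        ((1 / 2 : ℝ) • fderiv ℝ (fun z : E => (F z) ^ 2) y) (x : E) / F (x : E)) = F y := by
  set G : E → ℝ := fun z : E => (F z) ^ 2 with hGdef
  have hdiff : ∀ z : E, z ≠ 0 → DifferentiableAt ℝ G z := fun z hz =>
    (hC2 z hz).differentiableAt two_ne_zero
  -- Euler's identity: fderiv G z z = 2 (F z)^2
  have euler : ∀ z : E, z ≠ 0 → fderiv ℝ G z z = 2 * (F z) ^ 2 := by
    intro z hz
    have hc : HasDerivAt (fun t : ℝ => t • z) z 1 := by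
      simpa using (hasDerivAt_id (1 : ℝ)).smul_const z
    have h1 : HasDerivAt (fun t : ℝ => G (t • z)) (fderiv ℝ G z z) 1 := by
      have hF : HasFDerivAt G (fderiv ℝ G z) ((1 : ℝ) • z) := by
        rw [one_smul]; exact (hdiff z hz).hasFDerivAt
      exact hF.comp_hasDerivAt 1 hc
    have h2 : HasDerivAt (fun t : ℝ => t ^ 2 * (F z) ^ 2) (2 * (F z) ^ 2) 1 := by
      simpa using (hasDerivAt_pow 2 (1 : ℝ)).mul_const ((F z) ^ 2)
    have heq : (fun t : ℝ => t ^ 2 * (F z) ^ 2) =ᶠ[nhds (1 : ℝ)]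
        fun t : ℝ => G (t • z) := by
      filter_upwards [Ioi_mem_nhds (zero_lt_one (α := ℝ))] with t ht
      simp only [hGdef, hFhom t ht, mul_pow]
    exact ((h2.congr_of_eventuallyEq heq.symm).unique h1).symm
  -- Fundamental inequality, equal-norm case
  have ineq1 : ∀ x : E, x ≠ 0 → F x = F y → fderiv ℝ G y x ≤ 2 * (F y) ^ 2 := by
    intro x hx hFx
    set u : E := x - y with hu
    set c : ℝ → E := fun t => y + t • u with hcdef
    by_cases hsep : ∀ t ∈ Icc (0 : ℝ) 1, c t ≠ 0
    · -- segment avoids 0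
      have hc0 : c 0 = y := by simp [hcdef]
      have hc1 : c 1 = x := by simp [hcdef, hu]
      have hcd : ∀ t : ℝ, HasDerivAt c u t := fun t => by
        simpa [hcdef] using (((hasDerivAt_id t).smul_const u).const_add y)
      set ψ : ℝ → ℝ := fun t => fderiv ℝ G (c t) u with hψdef
      have hφ : ∀ t ∈ Icc (0 : ℝ) 1, HasDerivAt (fun s => G (c s)) (ψ t) t := by
        intro t ht
        exact (hdiff (c t) (hsep t ht)).hasFDerivAt.comp_hasDerivAt t (hcd t)
      have hψd : ∀ t ∈ Icc (0 : ℝ) 1,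
          HasDerivAt ψ (fderiv ℝ (fun z : E => fderiv ℝ G z) (c t) u u) t := by
        intro t ht
        have hH : DifferentiableAt ℝ (fun z : E => fderiv ℝ G z) (c t) :=
          ((hC2 (c t) (hsep t ht)).fderiv_right (m := 1) (by norm_num)).differentiableAt one_ne_zero
        have h1 : HasDerivAt (fun s => fderiv ℝ G (c s))
            ((fderiv ℝ (fun z : E => fderiv ℝ G z) (c t)) u) t :=
          hH.hasFDerivAt.comp_hasDerivAt t (hcd t)
        have := h1.clm_apply (hasDerivAt_const t u)
        simpa using this
      have hψnonneg : ∀ t ∈ Icc (0 : ℝ) 1,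
          0 ≤ fderiv ℝ (fun z : E => fderiv ℝ G z) (c t) u u := by
        intro t ht
        rcases eq_or_ne u 0 with h0 | h0
        · simp [h0]
        · have := hposdef (c t) (hsep t ht) u h0
          linarith
      -- ψ is monotone on [0,1]
      have hψmono : MonotoneOn ψ (Icc (0 : ℝ) 1) := by
        apply monotoneOn_of_deriv_nonneg (convex_Icc 0 1)
        · exact fun t ht => ((hψd t ht).continuousAt.continuousWithinAt)
        · intro t ht
          rw [interior_Icc] at ht
          exact ((hψd t (Ioo_subset_Icc_self ht)).differentiableAt).differentiableWithinAt
        · intro t ht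
          rw [interior_Icc] at ht
          rw [(hψd t (Ioo_subset_Icc_self ht)).deriv]
          exact hψnonneg t (Ioo_subset_Icc_self ht)
      -- MVT
      obtain ⟨d, hd, hdslope⟩ := exists_hasDerivAt_eq_slope (fun s => G (c s)) ψ
        (zero_lt_one) (fun t ht => (hφ t ht).continuousAt.continuousWithinAt)
        (fun t ht => hφ t (Ioo_subset_Icc_self ht))
      have hψ0 : ψ 0 ≤ ψ d := hψmono (left_mem_Icc.2 zero_le_one)
        (Ioo_subset_Icc_self hd) hd.1.le
      have hval : ψ d = G x - G y := by
        rw [hdslope, hc1, hc0]; ring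
      have hGx : G x = G y := by simp [hGdef, hFx]
      have hψ0val : ψ 0 = fderiv ℝ G y x - 2 * (F y) ^ 2 := by
        rw [hψdef]
        simp only [hc0, hu, map_sub]
        rw [euler y hy]
      have : ψ 0 ≤ 0 := by rw [hval, hGx] at hψ0; linarith
      rw [hψ0val] at this; linarith
    · -- segment hits 0 : x is a nonpositive multiple of y
      push_neg at hsep
      obtain ⟨t, ht, htz⟩ := hsep
      have ht0 : t ≠ 0 := by
        intro h; rw [h] at htz; simp [hcdef] at htz; exact hy htz
      have hx' : x = ((t - 1) / t) • y := by
        have h1 : t • x = (t - 1) • y := by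
          have : y + t • (x - y) = 0 := htz
          have := this
          rw [smul_sub] at this
          have h2 : t • x = t • y - y := by
            apply eq_sub_of_add_eq
            linear_combination (norm := module) this
          rw [h2]; module
        have := congrArg (fun v => (t⁻¹ : ℝ) • v) h1
        simpa [smul_smul, inv_mul_cancel₀ ht0, div_eq_inv_mul, mul_comm] using this
      have htlt : t < 1 := by
        rcases lt_or_eq_of_le ht.2 with h | h
        · exact h
        · exfalso; apply hx; rw [hx', ← h]; simp
      have hcoef : (t - 1) / t ≤ 0 := by
        apply div_nonpos_of_nonpos_of_nonneg <;> [linarith; exact ht.1]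
      have : fderiv ℝ G y x = ((t - 1) / t) * (2 * (F y) ^ 2) := by
        rw [hx', map_smul, euler y hy]; simp
      rw [this]
      have h2 : (0 : ℝ) ≤ 2 * (F y) ^ 2 := by positivity
      nlinarith
  -- Fundamental inequality, general case
  have key : ∀ x : E, x ≠ 0 → fderiv ℝ G y x ≤ 2 * F y * F x := by
    intro x hx
    have hFx := hFpos x hx
    have hFy := hFpos y hy
    set l : ℝ := F y / F x with hl
    have hlpos : 0 < l := div_pos hFy hFx
    have hx' : (l • x : E) ≠ 0 := smul_ne_zero (ne_of_gt hlpos) hx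
    have hFx' : F (l • x) = F y := by
      rw [hFhom l hlpos x, hl]; field_simp
    have := ineq1 (l • x) hx' hFx'
    rw [map_smul] at this
    have h2 : l * fderiv ℝ G y x ≤ 2 * (F y) ^ 2 := this
    rw [hl] at h2
    rw [div_mul_eq_mul_div, div_le_iff₀ hFx] at h2
    nlinarith
  -- Now compute the supremum
  have hbdd : ∀ x : {x : E // x ≠ 0},
      ((1 / 2 : ℝ) • fderiv ℝ G y) (x : E) / F (x : E) ≤ F y := by
    rintro ⟨x, hx⟩
    have hFx := hFpos x hx
    rw [ContinuousLinearMap.smul_apply, div_le_iff₀ hFx]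
    have := key x hx
    simp only [smul_eq_mul]
    linarith
  have hBdd : BddAbove (Set.range fun x : {x : E // x ≠ 0} =>
      ((1 / 2 : ℝ) • fderiv ℝ G y) (x : E) / F (x : E)) :=
    ⟨F y, forall_mem_range.2 hbdd⟩
  have : Nonempty {x : E // x ≠ 0} := ⟨⟨y, hy⟩⟩
  apply le_antisymm (ciSup_le hbdd)
  have hyval : ((1 / 2 : ℝ) • fderiv ℝ G y) y / F y = F y := by
    rw [ContinuousLinearMap.smul_apply, euler y hy]
    have hFy := hFpos y hy
    field_simp
    ring
  calc F y = ((1 / 2 : ℝ) • fderiv ℝ G y) ((⟨y, hy⟩ : {x : E // x ≠ 0}) : E) /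
        F ((⟨y, hy⟩ : {x : E // x ≠ 0}) : E) := hyval.symm
    _ ≤ _ := le_ciSup hBdd ⟨y, hy⟩
end

section
/- Let c < 0 and set a := √(−c). Let R > 0, let u : ℝ → ℝ be differentiable on (0,R] with u'(r) ≥ −c − u(r)² for all r ∈ (0,R], and suppose there is ε ∈ (0,R] with u(ε) ≥ a·coth(a·ε). Then u(r) ≥ a·coth(a·r) for all r ∈ [ε, R]. -/
/-- **Riccati comparison (analytic core of Theorem 5.2).** Let `c < 0`, `a = √(-c)`,
`R > 0`, and let `u` be differentiable on `(0,R]` with `u' ≥ -c - u²` there.  If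
`u(ε) ≥ a·coth(a·ε)` for some `ε ∈ (0,R]`, then `u(r) ≥ a·coth(a·r)` for all
`r ∈ [ε,R]`. -/
theorem riccati_comparison (c : ℝ) (hc : c < 0) (R : ℝ) (hR : 0 < R)
    (u u' : ℝ → ℝ)
    (hu : ∀ r ∈ Set.Ioc (0 : ℝ) R, HasDerivAt u (u' r) r)
    (hriccati : ∀ r ∈ Set.Ioc (0 : ℝ) R, -c - (u r) ^ 2 ≤ u' r)
    (ε : ℝ) (hε : ε ∈ Set.Ioc (0 : ℝ) R)
    (hinit : Real.sqrt (-c) *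
        (Real.cosh (Real.sqrt (-c) * ε) / Real.sinh (Real.sqrt (-c) * ε)) ≤ u ε) :
    ∀ r ∈ Set.Icc ε R,
      Real.sqrt (-c) *
        (Real.cosh (Real.sqrt (-c) * r) / Real.sinh (Real.sqrt (-c) * r)) ≤ u r := by
  set a : ℝ := Real.sqrt (-c) with ha_def
  have ha : 0 < a := Real.sqrt_pos.2 (by linarith)
  have ha2 : a ^ 2 = -c := Real.sq_sqrt (by linarith)
  set v : ℝ → ℝ := fun r => a * (Real.cosh (a * r) / Real.sinh (a * r)) with hv_def
  -- v has derivative -c - v² on r > 0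
  have hsinh_pos : ∀ r : ℝ, 0 < r → 0 < Real.sinh (a * r) := fun r hr =>
    Real.sinh_pos_iff.2 (mul_pos ha hr)
  have hv : ∀ r : ℝ, 0 < r → HasDerivAt v (-c - (v r) ^ 2) r := by
    intro r hr
    have hs := (hsinh_pos r hr).ne'
    have hcosh : HasDerivAt (fun x => Real.cosh (a * x)) (a * Real.sinh (a * r)) r := by
      simpa [mul_comm] using ((hasDerivAt_id r).const_mul a).cosh
    have hsinh : HasDerivAt (fun x => Real.sinh (a * x)) (a * Real.cosh (a * r)) r := by
      simpa [mul_comm] using ((hasDerivAt_id r).const_mul a).sinh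
    have hdiv := (hcosh.div hsinh hs).const_mul a
    refine hdiv.congr_deriv ?_
    have hid : Real.cosh (a * r) ^ 2 - Real.sinh (a * r) ^ 2 = 1 :=
      Real.cosh_sq_sub_sinh_sq (a * r)
    simp only [hv_def]
    field_simp
    nlinarith [hsinh_pos r hr]
  -- continuity facts
  have hεR : ε ≤ R := hε.2
  have hu_cont : ContinuousOn u (Set.Icc ε R) := by
    intro x hx
    exact ((hu x ⟨lt_of_lt_of_le hε.1 hx.1, hx.2⟩).continuousAt).continuousWithinAt
  have hv_cont : ContinuousOn v (Set.Icc ε R) := by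
    intro x hx
    exact ((hv x (lt_of_lt_of_le hε.1 hx.1)).continuousAt).continuousWithinAt
  -- bound on |u + v| on the compact interval
  obtain ⟨C, hC⟩ := (isCompact_Icc (a := ε) (b := R)).exists_bound_of_continuousOn
    (f := fun x => u x + v x) (hu_cont.add hv_cont)
  set K : ℝ := max C 0 with hK_def
  have hK0 : 0 ≤ K := le_max_right _ _
  have hK : ∀ x ∈ Set.Icc ε R, |u x + v x| ≤ K := fun x hx =>
    le_trans (hC x hx) (le_max_left _ _)
  -- main estimate: for each δ > 0, v - u ≤ δ exp((K+1)(x-ε)) on [ε,R]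
  have key : ∀ δ : ℝ, 0 < δ → ∀ x ∈ Set.Icc ε R,
      v x - u x ≤ δ * Real.exp ((K + 1) * (x - ε)) := by
    intro δ hδ
    have := image_le_of_deriv_right_lt_deriv_boundary
      (f := fun x => v x - u x) (f' := fun x => (-c - (v x) ^ 2) - u' x)
      (a := ε) (b := R)
      (hv_cont.sub hu_cont)
      (fun x hx => (((hv x (lt_of_lt_of_le hε.1 hx.1)).sub
        (hu x ⟨lt_of_lt_of_le hε.1 hx.1, le_of_lt hx.2⟩)).hasDerivWithinAt))
      (B := fun x => δ * Real.exp ((K + 1) * (x - ε)))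
      (B' := fun x => (K + 1) * (δ * Real.exp ((K + 1) * (x - ε))))
      ?_ ?_ ?_
    · exact fun x hx => this hx
    · -- initial condition
      simp only [sub_self, mul_zero, Real.exp_zero, mul_one]
      have : v ε - u ε ≤ 0 := by simpa [hv_def] using sub_nonpos.2 hinit
      linarith
    · intro x
      have h1 : HasDerivAt (fun x : ℝ => (K + 1) * (x - ε)) (K + 1) x := by
        simpa using ((hasDerivAt_id x).sub_const ε).const_mul (K + 1)
      have := (h1.exp.const_mul δ)
      refine this.congr_deriv ?_
      ring
    · -- bound at contact points
      intro x hx hcontact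
      replace hcontact : v x - u x = δ * Real.exp ((K + 1) * (x - ε)) := hcontact
      have hxI : x ∈ Set.Icc ε R := ⟨hx.1, le_of_lt hx.2⟩
      have hxpos : 0 < x := lt_of_lt_of_le hε.1 hx.1
      have hBpos : 0 < δ * Real.exp ((K + 1) * (x - ε)) :=
        mul_pos hδ (Real.exp_pos _)
      have hfpos : 0 < v x - u x := hcontact ▸ hBpos
      have hric := hriccati x ⟨hxpos, le_of_lt hx.2⟩
      have hKx := hK x hxI
      have habs : -(u x + v x) ≤ K := by
        have := abs_le.1 hKx
        linarith [this.1]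
      calc (-c - (v x) ^ 2) - u' x ≤ (-c - (v x) ^ 2) - (-c - (u x) ^ 2) := by linarith
        _ = -(u x + v x) * (v x - u x) := by ring
        _ ≤ K * (v x - u x) := by
            apply mul_le_mul_of_nonneg_right habs (le_of_lt hfpos)
        _ < (K + 1) * (v x - u x) := by nlinarith
        _ = (K + 1) * (δ * Real.exp ((K + 1) * (x - ε))) := by rw [hcontact]
  -- conclude by letting δ → 0
  intro r hr
  have hconc : v r - u r ≤ 0 := by
    apply le_of_forall_pos_le_add
    intro η hη
    have hδ : 0 < η / Real.exp ((K + 1) * (r - ε)) := div_pos hη (Real.exp_pos _)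
    have := key _ hδ r hr
    rw [div_mul_cancel₀ _ (Real.exp_pos _).ne'] at this
    linarith
  have : v r ≤ u r := by linarith
  simpa [hv_def] using this
end

section
/- Let c, Λ ∈ ℝ, let n ≥ 2 be an integer, and let R > 0, with R ≤ π/√c in case c > 0. Let σ : ℝ → ℝ be positive and differentiable on (0,R) and satisfy σ'(r)/σ(r) ≥ (n−1)·ct_c(r) − Λ for all r ∈ (0,R). Then the function r ↦ σ(r)·e^{Λr}/s_c(r)^{n−1} is monotone nondecreasing on (0,R). -/
/-- The comparison function `s_c`: `sin(√c·t)` for `c > 0`, `t` for `c = 0`, and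
`sinh(√(-c)·t)` for `c < 0`. -/
noncomputable def sc (c t : ℝ) : ℝ :=
  if 0 < c then Real.sin (Real.sqrt c * t)
  else if c = 0 then t
  else Real.sinh (Real.sqrt (-c) * t)

/-- The comparison function `ct_c = s_c'/s_c`: `√c·cot(√c·t)` for `c > 0`, `1/t` for
`c = 0`, and `√(-c)·coth(√(-c)·t)` for `c < 0`. -/
noncomputable def ctc (c t : ℝ) : ℝ :=
  if 0 < c then Real.sqrt c * (Real.cos (Real.sqrt c * t) / Real.sin (Real.sqrt c * t))
  else if c = 0 then 1 / t
  else Real.sqrt (-c) * (Real.cosh (Real.sqrt (-c) * t) / Real.sinh (Real.sqrt (-c) * t))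

private lemma sc_pos_of (c R : ℝ) (hRc : 0 < c → R ≤ Real.pi / Real.sqrt c)
    {r : ℝ} (hr : r ∈ Set.Ioo (0:ℝ) R) : 0 < sc c r := by
  obtain ⟨hr0, hrR⟩ := hr
  unfold sc
  split_ifs with h1 h2
  · have hsq : 0 < Real.sqrt c := Real.sqrt_pos.mpr h1
    apply Real.sin_pos_of_pos_of_lt_pi (by positivity)
    have h := hRc h1
    have : Real.sqrt c * R ≤ Real.pi := by
      rw [le_div_iff₀ hsq] at h; linarith [h]
    nlinarith
  · exact hr0
  · have hc : c < 0 := lt_of_le_of_ne (not_lt.mp h1) h2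
    have hsq : 0 < Real.sqrt (-c) := Real.sqrt_pos.mpr (by linarith)
    exact Real.sinh_pos_iff.mpr (by positivity)

private lemma sc_hasDeriv (c : ℝ) {r : ℝ} (hpos : 0 < sc c r) :
    HasDerivAt (sc c) (ctc c r * sc c r) r := by
  unfold sc ctc at *
  split_ifs at * with h1 h2
  · have hsin : Real.sin (Real.sqrt c * r) ≠ 0 := ne_of_gt hpos
    have h := (Real.hasDerivAt_sin (Real.sqrt c * r)).comp r
      ((hasDerivAt_id r).const_mul (Real.sqrt c))
    refine h.congr_deriv ?_
    field_simp
  · have h := hasDerivAt_id r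
    refine h.congr_deriv ?_
    field_simp [ne_of_gt hpos]
  · have hsinh : Real.sinh (Real.sqrt (-c) * r) ≠ 0 := ne_of_gt hpos
    have h := (Real.hasDerivAt_sinh (Real.sqrt (-c) * r)).comp r
      ((hasDerivAt_id r).const_mul (Real.sqrt (-c)))
    refine h.congr_deriv ?_
    field_simp

/-- **Monotonicity step in Theorem 6.1.** Let `c, Λ ∈ ℝ`, `n ≥ 2`, `R > 0` with
`R ≤ π/√c` if `c > 0`.  If `σ > 0` is differentiable on `(0,R)` with
`σ'/σ ≥ (n-1)·ct_c - Λ` there, then `r ↦ σ(r)·e^{Λr}/s_c(r)^{n-1}` is monotone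
nondecreasing on `(0,R)`. -/
theorem density_ratio_monotone (c Λ : ℝ) (n : ℕ) (hn : 2 ≤ n) (R : ℝ) (hR : 0 < R)
    (hRc : 0 < c → R ≤ Real.pi / Real.sqrt c)
    (σ σ' : ℝ → ℝ)
    (hσpos : ∀ r ∈ Set.Ioo (0 : ℝ) R, 0 < σ r)
    (hσderiv : ∀ r ∈ Set.Ioo (0 : ℝ) R, HasDerivAt σ (σ' r) r)
    (hineq : ∀ r ∈ Set.Ioo (0 : ℝ) R, ((n : ℝ) - 1) * ctc c r - Λ ≤ σ' r / σ r) :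
    MonotoneOn (fun r => σ r * Real.exp (Λ * r) / (sc c r) ^ (n - 1))
      (Set.Ioo (0 : ℝ) R) := by
  set f := fun r => σ r * Real.exp (Λ * r) / (sc c r) ^ (n - 1) with hfdef
  have key : ∀ r ∈ Set.Ioo (0:ℝ) R, HasDerivAt f
      (((σ' r * Real.exp (Λ * r) + σ r * (Real.exp (Λ * r) * Λ)) * (sc c r) ^ (n-1)
        - σ r * Real.exp (Λ * r) * (((n-1 : ℕ) : ℝ) * (sc c r) ^ (n-1-1) * (ctc c r * sc c r)))
        / ((sc c r) ^ (n-1)) ^ 2) r := by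
    intro r hr
    have hg := sc_pos_of c R hRc hr
    have hu : HasDerivAt (fun r => σ r * Real.exp (Λ * r))
        (σ' r * Real.exp (Λ * r) + σ r * (Real.exp (Λ * r) * Λ)) r := by
      have hexp : HasDerivAt (fun x => Real.exp (Λ * x)) (Real.exp (Λ * r) * Λ) r := by
        simpa using ((hasDerivAt_id r).const_mul Λ).exp
      exact (hσderiv r hr).mul hexp
    have hv : HasDerivAt (fun r => (sc c r) ^ (n-1))
        (((n-1 : ℕ) : ℝ) * (sc c r) ^ (n-1-1) * (ctc c r * sc c r)) r :=
      (sc_hasDeriv c hg).pow (n-1)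
    exact hu.div hv (pow_ne_zero _ (ne_of_gt hg))
  apply monotoneOn_of_deriv_nonneg (convex_Ioo 0 R)
  · exact fun r hr => ((key r hr).continuousAt).continuousWithinAt
  · intro r hr
    rw [interior_Ioo] at hr
    exact (key r hr).differentiableAt.differentiableWithinAt
  · intro r hr
    rw [interior_Ioo] at hr
    rw [(key r hr).deriv]
    have hg := sc_pos_of c R hRc hr
    have hσ := hσpos r hr
    have hi := hineq r hr
    have h2 : (((n:ℝ)-1) * ctc c r - Λ) * σ r ≤ σ' r := by
      have h := mul_le_mul_of_nonneg_right hi (le_of_lt hσ)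
      rwa [div_mul_cancel₀ _ (ne_of_gt hσ)] at h
    apply div_nonneg _ (sq_nonneg _)
    have hE : (0:ℝ) < Real.exp (Λ * r) := Real.exp_pos _
    have hgm : 0 < sc c r ^ (n-1) := pow_pos hg _
    have hcast : ((n-1 : ℕ) : ℝ) = (n:ℝ) - 1 := by
      have : 1 ≤ n := by omega
      push_cast [Nat.cast_sub this]; ring
    have hpow : sc c r ^ (n-1) = sc c r ^ (n-1-1) * sc c r := by
      rw [← pow_succ]; congr 1; omega
    have hfac : 0 ≤ σ' r + Λ * σ r - ((n:ℝ)-1) * ctc c r * σ r := by nlinarith [h2]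
    have heq : (σ' r * Real.exp (Λ * r) + σ r * (Real.exp (Λ * r) * Λ)) * (sc c r) ^ (n-1)
        - σ r * Real.exp (Λ * r) * (((n-1 : ℕ) : ℝ) * (sc c r) ^ (n-1-1) * (ctc c r * sc c r))
        = Real.exp (Λ * r) * (sc c r ^ (n-1-1) * sc c r)
          * (σ' r + Λ * σ r - ((n:ℝ)-1) * ctc c r * σ r) := by
      rw [hcast, hpow]; ring
    rw [heq, ← hpow]
    exact mul_nonneg (mul_nonneg hE.le hgm.le) hfac
end

section
/- Let c, Λ ∈ ℝ, let n ≥ 2 be an integer, and let R > 0, with R ≤ π/√c in case c > 0. Let σ : ℝ → ℝ be positive and differentiable on (0,R) and satisfy σ'(r)/σ(r) ≤ (n−1)·ct_c(r) + Λ for all r ∈ (0,R). Then the function r ↦ σ(r)·e^{−Λr}/s_c(r)^{n−1} is monotone nonincreasing on (0,R). -/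
/-- The derivative of `sc`. -/
noncomputable def scd (c t : ℝ) : ℝ :=
  if 0 < c then Real.sqrt c * Real.cos (Real.sqrt c * t)
  else if c = 0 then 1
  else Real.sqrt (-c) * Real.cosh (Real.sqrt (-c) * t)

lemma hasDerivAt_sc (c r : ℝ) : HasDerivAt (sc c) (scd c r) r := by
  unfold sc scd
  split_ifs with h1 h2
  · simpa [mul_comm] using ((hasDerivAt_id r).const_mul (Real.sqrt c)).sin
  · exact hasDerivAt_id' r
  · simpa [mul_comm] using ((hasDerivAt_id r).const_mul (Real.sqrt (-c))).sinh

lemma ctc_eq_scd_div_sc (c r : ℝ) : ctc c r = scd c r / sc c r := by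
  unfold ctc scd sc
  split_ifs <;> ring

lemma continuous_sc (c : ℝ) : Continuous (sc c) := by
  unfold sc
  split_ifs <;> fun_prop

lemma sc_pos {c R : ℝ} (hRc : 0 < c → R ≤ Real.pi / Real.sqrt c) {r : ℝ}
    (hr : r ∈ Set.Ioo (0 : ℝ) R) : 0 < sc c r := by
  obtain ⟨hr0, hrR⟩ := hr
  unfold sc
  split_ifs with h1 h2
  · have hsq : 0 < Real.sqrt c := Real.sqrt_pos.mpr h1
    apply Real.sin_pos_of_pos_of_lt_pi (by positivity)
    calc Real.sqrt c * r < Real.sqrt c * (Real.pi / Real.sqrt c) := by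
          exact mul_lt_mul_of_pos_left (lt_of_lt_of_le hrR (hRc h1)) hsq
      _ = Real.pi := by field_simp
  · exact hr0
  · have h3 : 0 < -c := by
      push_neg at h1
      exact neg_pos.mpr (lt_of_le_of_ne h1 h2)
    have hsq : 0 < Real.sqrt (-c) := Real.sqrt_pos.mpr h3
    exact Real.sinh_pos_iff.mpr (by positivity)

/-- **Monotonicity step in Theorem 6.3.** Let `c, Λ ∈ ℝ`, `n ≥ 2`, `R > 0` with
`R ≤ π/√c` if `c > 0`.  If `σ > 0` is differentiable on `(0,R)` with
`σ'/σ ≤ (n-1)·ct_c + Λ` there, then `r ↦ σ(r)·e^{-Λr}/s_c(r)^{n-1}` is monotone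
nonincreasing on `(0,R)`. -/
theorem density_ratio_antitone (c Λ : ℝ) (n : ℕ) (hn : 2 ≤ n) (R : ℝ) (hR : 0 < R)
    (hRc : 0 < c → R ≤ Real.pi / Real.sqrt c)
    (σ σ' : ℝ → ℝ)
    (hσpos : ∀ r ∈ Set.Ioo (0 : ℝ) R, 0 < σ r)
    (hσderiv : ∀ r ∈ Set.Ioo (0 : ℝ) R, HasDerivAt σ (σ' r) r)
    (hineq : ∀ r ∈ Set.Ioo (0 : ℝ) R, σ' r / σ r ≤ ((n : ℝ) - 1) * ctc c r + Λ) :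
    AntitoneOn (fun r => σ r * Real.exp (-Λ * r) / (sc c r) ^ (n - 1))
      (Set.Ioo (0 : ℝ) R) := by
  have hn1 : n - 1 - 1 = n - 2 := by omega
  have hcast : ((n - 1 : ℕ) : ℝ) = (n : ℝ) - 1 := by
    push_cast [Nat.cast_sub (by omega : 1 ≤ n)]; ring
  apply antitoneOn_of_hasDerivWithinAt_nonpos (convex_Ioo 0 R)
    (f' := fun r => ((σ' r * Real.exp (-Λ * r) + σ r * (Real.exp (-Λ * r) * -Λ)) *
      sc c r ^ (n - 1) - σ r * Real.exp (-Λ * r) *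
      (((n - 1 : ℕ) : ℝ) * sc c r ^ (n - 1 - 1) * scd c r)) / (sc c r ^ (n - 1)) ^ 2)
  · -- continuity
    apply ContinuousOn.div
    · exact ContinuousOn.mul (fun r hr => ((hσderiv r hr).continuousAt).continuousWithinAt)
        (by fun_prop)
    · exact ((continuous_sc c).pow _).continuousOn
    · intro r hr
      exact pow_ne_zero _ (sc_pos hRc hr).ne'
  · rw [interior_Ioo]
    intro r hr
    have hE : HasDerivAt (fun x => Real.exp (-Λ * x)) (Real.exp (-Λ * r) * -Λ) r := by
      simpa using ((hasDerivAt_id r).const_mul (-Λ)).exp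
    have hne : sc c r ^ (n - 1) ≠ 0 := pow_ne_zero _ (sc_pos hRc hr).ne'
    exact (((hσderiv r hr).mul hE).div ((hasDerivAt_sc c r).pow (n - 1))
      hne).hasDerivWithinAt
  · rw [interior_Ioo]
    intro r hr
    set S := sc c r with hSdef
    set D := scd c r with hDdef
    set E := Real.exp (-Λ * r) with hEdef
    have hS : 0 < S := sc_pos hRc hr
    have hEpos : 0 < E := Real.exp_pos _
    have hσp := hσpos r hr
    -- key inequality: σ' r * S ≤ ((n-1) * D + Λ * S) * σ r
    have hkey : σ' r * S ≤ (((n : ℝ) - 1) * D + Λ * S) * σ r := by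
      have h1 : σ' r ≤ (((n : ℝ) - 1) * ctc c r + Λ) * σ r :=
        (div_le_iff₀ hσp).mp (hineq r hr)
      have h2 : σ' r * S ≤ (((n : ℝ) - 1) * ctc c r + Λ) * σ r * S :=
        mul_le_mul_of_nonneg_right h1 hS.le
      have h3 : ctc c r * S = D := by
        rw [ctc_eq_scd_div_sc, ← hSdef]; exact div_mul_cancel₀ _ hS.ne'
      calc σ' r * S ≤ (((n : ℝ) - 1) * ctc c r + Λ) * σ r * S := h2
        _ = (((n : ℝ) - 1) * (ctc c r * S) + Λ * S) * σ r := by ring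
        _ = (((n : ℝ) - 1) * D + Λ * S) * σ r := by rw [h3]
    apply div_nonpos_of_nonpos_of_nonneg _ (by positivity)
    have hpow : S ^ (n - 1) = S ^ (n - 2) * S := by
      rw [← pow_succ]
      congr 1
      omega
    rw [hcast, hn1, hpow]
    have hfac : σ' r * S + σ r * -Λ * S - σ r * (((n : ℝ) - 1) * D) ≤ 0 := by nlinarith
    have hprod := mul_nonpos_of_nonneg_of_nonpos
      (mul_nonneg hEpos.le (pow_nonneg hS.le (n - 2))) hfac
    calc (σ' r * E + σ r * (E * -Λ)) * (S ^ (n - 2) * S) -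
          σ r * E * (((n : ℝ) - 1) * S ^ (n - 2) * D)
        = E * S ^ (n - 2) * (σ' r * S + σ r * -Λ * S - σ r * (((n : ℝ) - 1) * D)) := by ring
      _ ≤ 0 := hprod
end
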